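/- arXiv:2304.02596 — 2 statements merged into one kernel-verified Lean document; each statement's English description precedes it below -/
import Mathlib

section
/- Normalization for the immediate grounding and grounding tree rules: in the calculus over an arbitrary immediate grounding relation R consisting of the hypothesis rule, the grounding rule, the ▶-introduction and ▶-elimination rules, and the ▷-introduction and ▷-elimination rules, every derivation reduces to a normal derivation (one containing no redex) in finitely many detour-reduction steps; indeed every detour reduction strictly decreases the number of rule applications in the derivation, so the detour-reduction relation is strongly normalizing. -/
inductive GTree (α : Type*) : Type _ where
  | mk (grounds : List (α ⊕ GTree α)) (conds : List (α ⊕ GTree α)) (concl : α)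

namespace GTree
variable {α : Type*}

def concl : GTree α → α
  | .mk _ _ b => b

end GTree

/-- The language extended by grounding claims: `Sum.inl a` is the plain formula `a`
(written `fm a`) and `Sum.inr t` is the grounding claim expressed by the grounding
tree `t` (written `tr t`). -/
abbrev EForm (α : Type*) := α ⊕ GTree α

/-- Derivations from a set `H` of hypotheses in the calculus consisting of the
hypothesis rule, the grounding rule, the ▶-introduction and ▶-elimination rules, and
the ▷-introduction and ▷-elimination rules over the immediate grounding relation `R`. -/
inductive Der {α : Type*} (R : List α → List α → α → Prop) (H : Set (EForm α)) :
    EForm α → Type _ where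
  | hyp {e : EForm α} : e ∈ H → Der R H e
  | rule {Γ Δ : List α} {B : α} :
      R Γ Δ B → (∀ a ∈ Γ ++ Δ, Der R H (Sum.inl a)) → Der R H (Sum.inl B)
  | introB {Γ Δ : List α} {B : α} :
      R Γ Δ B → (∀ a ∈ Γ ++ Δ, Der R H (Sum.inl a)) →
      Der R H (Sum.inr (.mk (Γ.map Sum.inl) (Δ.map Sum.inl) B))
  | elimBc {G C : List (α ⊕ GTree α)} {B : α} :
      Der R H (Sum.inr (.mk G C B)) → Der R H (Sum.inl B)
  | elimBg {G C : List (α ⊕ GTree α)} {B a : α} :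
      Der R H (Sum.inr (.mk G C B)) → Sum.inl a ∈ G → Der R H (Sum.inl a)
  | elimBd {G C : List (α ⊕ GTree α)} {B c : α} :
      Der R H (Sum.inr (.mk G C B)) → Sum.inl c ∈ C → Der R H (Sum.inl c)
  | introTg {s : GTree α} {Γ₁ Γ₂ Ξ : List (α ⊕ GTree α)} {B : α} :
      Der R H (Sum.inr s) → Der R H (Sum.inr (.mk (Γ₁ ++ [Sum.inl s.concl] ++ Γ₂) Ξ B)) →
      Der R H (Sum.inr (.mk (Γ₁ ++ [Sum.inr s] ++ Γ₂) Ξ B))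
  | introTc {s : GTree α} {Γ Ξ₁ Ξ₂ : List (α ⊕ GTree α)} {B : α} :
      Der R H (Sum.inr s) → Der R H (Sum.inr (.mk Γ (Ξ₁ ++ [Sum.inl s.concl] ++ Ξ₂) B)) →
      Der R H (Sum.inr (.mk Γ (Ξ₁ ++ [Sum.inr s] ++ Ξ₂) B))
  | elimTg1 {s : GTree α} {Γ₁ Γ₂ Ξ : List (α ⊕ GTree α)} {B : α} :
      Der R H (Sum.inr (.mk (Γ₁ ++ [Sum.inr s] ++ Γ₂) Ξ B)) → Der R H (Sum.inr s)
  | elimTg2 {s : GTree α} {Γ₁ Γ₂ Ξ : List (α ⊕ GTree α)} {B : α} :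
      Der R H (Sum.inr (.mk (Γ₁ ++ [Sum.inr s] ++ Γ₂) Ξ B)) →
      Der R H (Sum.inr (.mk (Γ₁ ++ [Sum.inl s.concl] ++ Γ₂) Ξ B))
  | elimTc1 {s : GTree α} {Γ Ξ₁ Ξ₂ : List (α ⊕ GTree α)} {B : α} :
      Der R H (Sum.inr (.mk Γ (Ξ₁ ++ [Sum.inr s] ++ Ξ₂) B)) → Der R H (Sum.inr s)
  | elimTc2 {s : GTree α} {Γ Ξ₁ Ξ₂ : List (α ⊕ GTree α)} {B : α} :
      Der R H (Sum.inr (.mk Γ (Ξ₁ ++ [Sum.inr s] ++ Ξ₂) B)) →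
      Der R H (Sum.inr (.mk Γ (Ξ₁ ++ [Sum.inl s.concl] ++ Ξ₂) B))

namespace Der
variable {α : Type*} {R : List α → List α → α → Prop} {H : Set (EForm α)}

/-- Transport of a derivation along an equality of conclusions. -/
def cast {e e' : EForm α} (d : Der R H e) (h : e = e') : Der R H e' := h ▸ d

/-- The number of rule applications in a derivation.  A ▶-introduction counts as two
rule applications, since it represents a ▶-introduction applied immediately below the
corresponding grounding rule application. -/
def size : ∀ {e : EForm α}, Der R H e → ℕ
  | _, .hyp _ => 0
  | _, @Der.rule _ _ _ Γ Δ _ _ f =>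
      1 + ((Γ ++ Δ).attach.map (fun x => size (f x.1 x.2))).sum
  | _, @Der.introB _ _ _ Γ Δ _ _ f =>
      2 + ((Γ ++ Δ).attach.map (fun x => size (f x.1 x.2))).sum
  | _, .elimBc d => 1 + size d
  | _, .elimBg d _ => 1 + size d
  | _, .elimBd d _ => 1 + size d
  | _, .introTg d₁ d₂ => 1 + size d₁ + size d₂
  | _, .introTc d₁ d₂ => 1 + size d₁ + size d₂
  | _, .elimTg1 d => 1 + size d
  | _, .elimTg2 d => 1 + size d
  | _, .elimTc1 d => 1 + size d
  | _, .elimTc2 d => 1 + size d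

end Der
section
variable {α : Type*} (R : List α → List α → α → Prop) (H : Set (EForm α))

/-- One-step detour reduction: `Red R H d d'` holds when `d'` is obtained from `d` by
replacing one redex subderivation of `d` by its contractum. -/
inductive Red : ∀ {e : EForm α}, Der R H e → Der R H e → Prop where
  /- ▶-detour contractions -/
  | redBc {Γ Δ : List α} {B : α} (hR : R Γ Δ B)
      (f : ∀ a ∈ Γ ++ Δ, Der R H (Sum.inl a)) :
      Red (Der.elimBc (Der.introB hR f)) (Der.rule hR f)
  | redBg {Γ Δ : List α} {B : α} (hR : R Γ Δ B)
      (f : ∀ a ∈ Γ ++ Δ, Der R H (Sum.inl a)) {a : α}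
      (h : Sum.inl a ∈ Γ.map Sum.inl) (h' : a ∈ Γ ++ Δ) :
      Red (Der.elimBg (Der.introB hR f) h) (f a h')
  | redBd {Γ Δ : List α} {B : α} (hR : R Γ Δ B)
      (f : ∀ a ∈ Γ ++ Δ, Der R H (Sum.inl a)) {c : α}
      (h : Sum.inl c ∈ Δ.map Sum.inl) (h' : c ∈ Γ ++ Δ) :
      Red (Der.elimBd (Der.introB hR f) h) (f c h')
  /- ▷-detour contractions: a ▷-elimination applied to a ▷-introduction reduces to the
  premiss derivation whose conclusion it has, or to a single ▷-elimination applied to a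
  premiss derivation when its conclusion is one ▷-elimination away from its conclusion. -/
  | redTg1 {s : GTree α} {Γ₁ Γ₂ Ξ : List (α ⊕ GTree α)} {B : α}
      (d₁ : Der R H (Sum.inr s))
      (d₂ : Der R H (Sum.inr (.mk (Γ₁ ++ [Sum.inl s.concl] ++ Γ₂) Ξ B))) :
      Red (Der.elimTg1 (s := s) (Γ₁ := Γ₁) (Γ₂ := Γ₂) (Der.introTg d₁ d₂)) d₁
  | redTg2 {s : GTree α} {Γ₁ Γ₂ Ξ : List (α ⊕ GTree α)} {B : α}
      (d₁ : Der R H (Sum.inr s))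
      (d₂ : Der R H (Sum.inr (.mk (Γ₁ ++ [Sum.inl s.concl] ++ Γ₂) Ξ B))) :
      Red (Der.elimTg2 (s := s) (Γ₁ := Γ₁) (Γ₂ := Γ₂) (Der.introTg d₁ d₂)) d₂
  | redTc1 {s : GTree α} {Γ Ξ₁ Ξ₂ : List (α ⊕ GTree α)} {B : α}
      (d₁ : Der R H (Sum.inr s))
      (d₂ : Der R H (Sum.inr (.mk Γ (Ξ₁ ++ [Sum.inl s.concl] ++ Ξ₂) B))) :
      Red (Der.elimTc1 (s := s) (Ξ₁ := Ξ₁) (Ξ₂ := Ξ₂) (Der.introTc d₁ d₂)) d₁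
  | redTc2 {s : GTree α} {Γ Ξ₁ Ξ₂ : List (α ⊕ GTree α)} {B : α}
      (d₁ : Der R H (Sum.inr s))
      (d₂ : Der R H (Sum.inr (.mk Γ (Ξ₁ ++ [Sum.inl s.concl] ++ Ξ₂) B))) :
      Red (Der.elimTc2 (s := s) (Ξ₁ := Ξ₁) (Ξ₂ := Ξ₂) (Der.introTc d₁ d₂)) d₂
  | redTg1Tg_left {s u : GTree α} {A₁ A₂ Γ₂ Ξ : List (α ⊕ GTree α)} {B : α}
      (d₁ : Der R H (Sum.inr s))
      (d₂ : Der R H (Sum.inr (.mk (A₁ ++ [Sum.inr u] ++ A₂ ++ [Sum.inl s.concl] ++ Γ₂) Ξ B))) :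
      Red (Der.elimTg1 (s := u) (Γ₁ := A₁) (Γ₂ := A₂ ++ [Sum.inr s] ++ Γ₂) (Ξ := Ξ) (B := B)
            ((Der.introTg (s := s) (Γ₁ := A₁ ++ [Sum.inr u] ++ A₂) (Γ₂ := Γ₂) d₁ d₂).cast
              (by simp)))
          (Der.elimTg1 (s := u) (Γ₁ := A₁) (Γ₂ := A₂ ++ [Sum.inl s.concl] ++ Γ₂) (Ξ := Ξ) (B := B)
            (d₂.cast (by simp)))
  | redTg1Tg_right {s u : GTree α} {Γ₁ A₁ A₂ Ξ : List (α ⊕ GTree α)} {B : α}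
      (d₁ : Der R H (Sum.inr s))
      (d₂ : Der R H (Sum.inr (.mk (Γ₁ ++ [Sum.inl s.concl] ++ (A₁ ++ [Sum.inr u] ++ A₂)) Ξ B))) :
      Red (Der.elimTg1 (s := u) (Γ₁ := Γ₁ ++ [Sum.inr s] ++ A₁) (Γ₂ := A₂) (Ξ := Ξ) (B := B)
            ((Der.introTg (s := s) (Γ₁ := Γ₁) (Γ₂ := A₁ ++ [Sum.inr u] ++ A₂) d₁ d₂).cast
              (by simp)))
          (Der.elimTg1 (s := u) (Γ₁ := Γ₁ ++ [Sum.inl s.concl] ++ A₁) (Γ₂ := A₂) (Ξ := Ξ) (B := B)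
            (d₂.cast (by simp)))
  | redTg1Tc {s u : GTree α} {A₁ A₂ Ξ₁ Ξ₂ : List (α ⊕ GTree α)} {B : α}
      (d₁ : Der R H (Sum.inr s))
      (d₂ : Der R H (Sum.inr (.mk (A₁ ++ [Sum.inr u] ++ A₂) (Ξ₁ ++ [Sum.inl s.concl] ++ Ξ₂) B))) :
      Red (Der.elimTg1 (s := u) (Γ₁ := A₁) (Γ₂ := A₂) (Der.introTc d₁ d₂))
          (Der.elimTg1 (s := u) (Γ₁ := A₁) (Γ₂ := A₂) d₂)
  | redTc1Tg {s u : GTree α} {Γ₁ Γ₂ X₁ X₂ : List (α ⊕ GTree α)} {B : α}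
      (d₁ : Der R H (Sum.inr s))
      (d₂ : Der R H (Sum.inr (.mk (Γ₁ ++ [Sum.inl s.concl] ++ Γ₂) (X₁ ++ [Sum.inr u] ++ X₂) B))) :
      Red (Der.elimTc1 (s := u) (Ξ₁ := X₁) (Ξ₂ := X₂) (Der.introTg d₁ d₂))
          (Der.elimTc1 (s := u) (Ξ₁ := X₁) (Ξ₂ := X₂) d₂)
  | redTc1Tc_left {s u : GTree α} {Γ X₁ X₂ Ξ₂ : List (α ⊕ GTree α)} {B : α}
      (d₁ : Der R H (Sum.inr s))
      (d₂ : Der R H (Sum.inr (.mk Γ (X₁ ++ [Sum.inr u] ++ X₂ ++ [Sum.inl s.concl] ++ Ξ₂) B))) :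
      Red (Der.elimTc1 (s := u) (Γ := Γ) (Ξ₁ := X₁) (Ξ₂ := X₂ ++ [Sum.inr s] ++ Ξ₂) (B := B)
            ((Der.introTc (s := s) (Ξ₁ := X₁ ++ [Sum.inr u] ++ X₂) (Ξ₂ := Ξ₂) d₁ d₂).cast
              (by simp)))
          (Der.elimTc1 (s := u) (Γ := Γ) (Ξ₁ := X₁) (Ξ₂ := X₂ ++ [Sum.inl s.concl] ++ Ξ₂) (B := B)
            (d₂.cast (by simp)))
  | redTc1Tc_right {s u : GTree α} {Γ Ξ₁ X₁ X₂ : List (α ⊕ GTree α)} {B : α}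
      (d₁ : Der R H (Sum.inr s))
      (d₂ : Der R H (Sum.inr (.mk Γ (Ξ₁ ++ [Sum.inl s.concl] ++ (X₁ ++ [Sum.inr u] ++ X₂)) B))) :
      Red (Der.elimTc1 (s := u) (Γ := Γ) (Ξ₁ := Ξ₁ ++ [Sum.inr s] ++ X₁) (Ξ₂ := X₂) (B := B)
            ((Der.introTc (s := s) (Ξ₁ := Ξ₁) (Ξ₂ := X₁ ++ [Sum.inr u] ++ X₂) d₁ d₂).cast
              (by simp)))
          (Der.elimTc1 (s := u) (Γ := Γ) (Ξ₁ := Ξ₁ ++ [Sum.inl s.concl] ++ X₁) (Ξ₂ := X₂) (B := B)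
            (d₂.cast (by simp)))
  /- congruence: reduction of one premiss subderivation -/
  | congRule {Γ Δ : List α} {B : α} (hR : R Γ Δ B)
      (f g : ∀ a ∈ Γ ++ Δ, Der R H (Sum.inl a)) (a₀ : α) (h₀ : a₀ ∈ Γ ++ Δ) :
      Red (f a₀ h₀) (g a₀ h₀) → (∀ a (h : a ∈ Γ ++ Δ), a ≠ a₀ → f a h = g a h) →
      Red (Der.rule hR f) (Der.rule hR g)
  | congIntroB {Γ Δ : List α} {B : α} (hR : R Γ Δ B)
      (f g : ∀ a ∈ Γ ++ Δ, Der R H (Sum.inl a)) (a₀ : α) (h₀ : a₀ ∈ Γ ++ Δ) :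
      Red (f a₀ h₀) (g a₀ h₀) → (∀ a (h : a ∈ Γ ++ Δ), a ≠ a₀ → f a h = g a h) →
      Red (Der.introB hR f) (Der.introB hR g)
  | congElimBc {G C : List (α ⊕ GTree α)} {B : α}
      {d d' : Der R H (Sum.inr (.mk G C B))} :
      Red d d' → Red (Der.elimBc d) (Der.elimBc d')
  | congElimBg {G C : List (α ⊕ GTree α)} {B a : α}
      {d d' : Der R H (Sum.inr (.mk G C B))} (h : Sum.inl a ∈ G) :
      Red d d' → Red (Der.elimBg d h) (Der.elimBg d' h)
  | congElimBd {G C : List (α ⊕ GTree α)} {B c : α}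
      {d d' : Der R H (Sum.inr (.mk G C B))} (h : Sum.inl c ∈ C) :
      Red d d' → Red (Der.elimBd d h) (Der.elimBd d' h)
  | congIntroTgL {s : GTree α} {Γ₁ Γ₂ Ξ : List (α ⊕ GTree α)} {B : α}
      {d₁ d₁' : Der R H (Sum.inr s)}
      (d₂ : Der R H (Sum.inr (.mk (Γ₁ ++ [Sum.inl s.concl] ++ Γ₂) Ξ B))) :
      Red d₁ d₁' → Red (Der.introTg d₁ d₂) (Der.introTg d₁' d₂)
  | congIntroTgR {s : GTree α} {Γ₁ Γ₂ Ξ : List (α ⊕ GTree α)} {B : α}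
      (d₁ : Der R H (Sum.inr s))
      {d₂ d₂' : Der R H (Sum.inr (.mk (Γ₁ ++ [Sum.inl s.concl] ++ Γ₂) Ξ B))} :
      Red d₂ d₂' → Red (Der.introTg d₁ d₂) (Der.introTg d₁ d₂')
  | congIntroTcL {s : GTree α} {Γ Ξ₁ Ξ₂ : List (α ⊕ GTree α)} {B : α}
      {d₁ d₁' : Der R H (Sum.inr s)}
      (d₂ : Der R H (Sum.inr (.mk Γ (Ξ₁ ++ [Sum.inl s.concl] ++ Ξ₂) B))) :
      Red d₁ d₁' → Red (Der.introTc d₁ d₂) (Der.introTc d₁' d₂)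
  | congIntroTcR {s : GTree α} {Γ Ξ₁ Ξ₂ : List (α ⊕ GTree α)} {B : α}
      (d₁ : Der R H (Sum.inr s))
      {d₂ d₂' : Der R H (Sum.inr (.mk Γ (Ξ₁ ++ [Sum.inl s.concl] ++ Ξ₂) B))} :
      Red d₂ d₂' → Red (Der.introTc d₁ d₂) (Der.introTc d₁ d₂')
  | congElimTg1 {s : GTree α} {Γ₁ Γ₂ Ξ : List (α ⊕ GTree α)} {B : α}
      {d d' : Der R H (Sum.inr (.mk (Γ₁ ++ [Sum.inr s] ++ Γ₂) Ξ B))} :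
      Red d d' → Red (Der.elimTg1 d) (Der.elimTg1 d')
  | congElimTg2 {s : GTree α} {Γ₁ Γ₂ Ξ : List (α ⊕ GTree α)} {B : α}
      {d d' : Der R H (Sum.inr (.mk (Γ₁ ++ [Sum.inr s] ++ Γ₂) Ξ B))} :
      Red d d' → Red (Der.elimTg2 d) (Der.elimTg2 d')
  | congElimTc1 {s : GTree α} {Γ Ξ₁ Ξ₂ : List (α ⊕ GTree α)} {B : α}
      {d d' : Der R H (Sum.inr (.mk Γ (Ξ₁ ++ [Sum.inr s] ++ Ξ₂) B))} :
      Red d d' → Red (Der.elimTc1 d) (Der.elimTc1 d')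
  | congElimTc2 {s : GTree α} {Γ Ξ₁ Ξ₂ : List (α ⊕ GTree α)} {B : α}
      {d d' : Der R H (Sum.inr (.mk Γ (Ξ₁ ++ [Sum.inr s] ++ Ξ₂) B))} :
      Red d d' → Red (Der.elimTc2 d) (Der.elimTc2 d')

end

namespace Der
variable {α : Type*} {R : List α → List α → α → Prop} {H : Set (EForm α)}

@[simp] lemma size_cast {e e' : EForm α} (d : Der R H e) (h : e = e') :
    (d.cast h).size = d.size := by subst h; rfl

lemma size_mem_le {Γ Δ : List α} (f : ∀ a ∈ Γ ++ Δ, Der R H (Sum.inl a))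
    {a : α} (h' : a ∈ Γ ++ Δ) :
    (f a h').size ≤ (((Γ ++ Δ).attach.map (fun x => size (f x.1 x.2))).sum) := by
  have hm : (⟨a, h'⟩ : {x // x ∈ Γ ++ Δ}) ∈ (Γ ++ Δ).attach := List.mem_attach _ _
  exact List.le_sum_of_mem (List.mem_map.2 ⟨⟨a, h'⟩, hm, rfl⟩)

lemma sum_attach_lt {Γ Δ : List α} (f g : ∀ a ∈ Γ ++ Δ, Der R H (Sum.inl a))
    (a₀ : α) (h₀ : a₀ ∈ Γ ++ Δ) (hlt : (g a₀ h₀).size < (f a₀ h₀).size)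
    (heq : ∀ a (h : a ∈ Γ ++ Δ), a ≠ a₀ → f a h = g a h) :
    ((Γ ++ Δ).attach.map (fun x => size (g x.1 x.2))).sum <
      ((Γ ++ Δ).attach.map (fun x => size (f x.1 x.2))).sum := by
  apply List.sum_lt_sum
  · rintro ⟨a, h⟩ -
    by_cases ha : a = a₀
    · subst ha
      have : f a h = f a h₀ := rfl
      have : g a h = g a h₀ := rfl
      simpa [this] using le_of_lt (by simpa using hlt)
    · rw [heq a h ha]
  · exact ⟨⟨a₀, h₀⟩, List.mem_attach _ _, hlt⟩

lemma red_size_lt : ∀ {e : EForm α} {d d' : Der R H e}, Red R H d d' → d'.size < d.size := by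
  intro e d d' r
  induction r with
  | redBc hR f => simp [Der.size]
  | redBg hR f h h' =>
      have := size_mem_le f h'
      simp only [Der.size]; omega
  | redBd hR f h h' =>
      have := size_mem_le f h'
      simp only [Der.size]; omega
  | redTg1 d₁ d₂ => simp [Der.size]; omega
  | redTg2 d₁ d₂ => simp [Der.size]; omega
  | redTc1 d₁ d₂ => simp [Der.size]; omega
  | redTc2 d₁ d₂ => simp [Der.size]; omega
  | redTg1Tg_left d₁ d₂ => simp [Der.size]
  | redTg1Tg_right d₁ d₂ => simp [Der.size]
  | redTg1Tc d₁ d₂ => simp [Der.size]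
  | redTc1Tg d₁ d₂ => simp [Der.size]
  | redTc1Tc_left d₁ d₂ => simp [Der.size]
  | redTc1Tc_right d₁ d₂ => simp [Der.size]
  | congRule hR f g a₀ h₀ hred heq ih =>
      have := sum_attach_lt f g a₀ h₀ ih heq
      simp only [Der.size]; omega
  | congIntroB hR f g a₀ h₀ hred heq ih =>
      have := sum_attach_lt f g a₀ h₀ ih heq
      simp only [Der.size]; omega
  | congElimBc _ ih => simp only [Der.size]; omega
  | congElimBg _ _ ih => simp only [Der.size]; omega
  | congElimBd _ _ ih => simp only [Der.size]; omega
  | congIntroTgL _ _ ih => simp only [Der.size]; omega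
  | congIntroTgR _ _ ih => simp only [Der.size]; omega
  | congIntroTcL _ _ ih => simp only [Der.size]; omega
  | congIntroTcR _ _ ih => simp only [Der.size]; omega
  | congElimTg1 _ ih => simp only [Der.size]; omega
  | congElimTg2 _ ih => simp only [Der.size]; omega
  | congElimTc1 _ ih => simp only [Der.size]; omega
  | congElimTc2 _ ih => simp only [Der.size]; omega

end Der

theorem grounding_normalization {α : Type*} (R : List α → List α → α → Prop)
    (H : Set (EForm α)) :
    (∀ (e : EForm α) (d d' : Der R H e), Red R H d d' → d'.size < d.size) ∧
    (∀ e : EForm α, WellFounded (fun d' d : Der R H e => Red R H d d')) ∧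
    (∀ (e : EForm α) (d : Der R H e), ∃ d' : Der R H e,
        Relation.ReflTransGen (fun x y => Red R H x y) d d' ∧
        ¬ ∃ d'' : Der R H e, Red R H d' d'') := by
  have hsize : ∀ (e : EForm α) (d d' : Der R H e), Red R H d d' → d'.size < d.size :=
    fun _ _ _ r => Der.red_size_lt r
  have hwf : ∀ e : EForm α, WellFounded (fun d' d : Der R H e => Red R H d d') := by
    intro e
    exact Subrelation.wf (fun {d' d} r => hsize e d d' r)
      (InvImage.wf Der.size Nat.lt_wfRel.wf)
  refine ⟨hsize, hwf, fun e d => ?_⟩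
  induction d using (hwf e).induction with
  | _ d ih =>
    by_cases hd : ∃ d'' : Der R H e, Red R H d d''
    · obtain ⟨d'', hr⟩ := hd
      obtain ⟨d', h₁, h₂⟩ := ih d'' hr
      exact ⟨d', Relation.ReflTransGen.head hr h₁, h₂⟩
    · exact ⟨d, Relation.ReflTransGen.refl, hd⟩
end

section
/- Mediate grounding as transitive closure: assume that every grounding rule instance has at least one ground, i.e., R Γ Δ B implies Γ ≠ []. Then for all formulas a, b : α, the mediate grounding claim MG [a] [] b holds if and only if Relation.TransGen (fun x y => R [x] [] y) a b holds; that is, on single-ground, condition-free claims the mediate grounding relation coincides with the transitive closure of the immediate grounding relation. -/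
/-- The mediate grounding relation generated by the immediate grounding relation `R`:
`MG R Γ Δ A` means that `Γ` is a mediate ground of `A` under the conditions `Δ`. -/
inductive MG {α : Type*} (R : List α → List α → α → Prop) : List α → List α → α → Prop where
  | base {Γ Δ A} : R Γ Δ A → MG R Γ Δ A
  | transG {Γ Δ A Γ₁ Γ₂ Δ₁ B} :
      MG R Γ Δ A → MG R (Γ₁ ++ [A] ++ Γ₂) Δ₁ B → MG R (Γ₁ ++ Γ ++ Γ₂) (Δ ++ Δ₁) B
  | transC {Γ Δ A Γ₁ Δ₁ Δ₂ B} :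
      MG R Γ Δ A → MG R Γ₁ (Δ₁ ++ [A] ++ Δ₂) B → MG R Γ₁ (Δ₁ ++ Γ ++ Δ ++ Δ₂) B

lemma mg_ne_nil {α : Type*} {R : List α → List α → α → Prop}
    (hR : ∀ (Γ Δ : List α) (B : α), R Γ Δ B → Γ ≠ []) {Γ Δ B}
    (h : MG R Γ Δ B) : Γ ≠ [] := by
  induction h with
  | base h => exact hR _ _ _ h
  | transG h1 h2 ih1 ih2 =>
      intro hnil
      have hl := congrArg List.length hnil
      simp only [List.length_append, List.length_nil] at hl
      rw [Ne, ← List.length_eq_zero_iff] at ih1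
      omega
  | transC h1 h2 ih1 ih2 => exact ih2

theorem mg_eq_transGen_on_singletons {α : Type*} (R : List α → List α → α → Prop)
    (hR : ∀ (Γ Δ : List α) (B : α), R Γ Δ B → Γ ≠ []) (a b : α) :
    MG R [a] [] b ↔ Relation.TransGen (fun x y => R [x] [] y) a b := by
  constructor
  · intro h
    have key : ∀ Γ Δ B, MG R Γ Δ B → ∀ x, Γ = [x] → Δ = [] →
        Relation.TransGen (fun x y => R [x] [] y) x B := by
      intro Γ Δ B h
      induction h with
      | base h =>
          rintro x rfl rfl
          exact Relation.TransGen.single h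
      | @transG Γ Δ A Γ₁ Γ₂ Δ₁ B h1 h2 ih1 ih2 =>
          rintro x hΓ hΔ
          rw [List.append_eq_nil_iff] at hΔ
          obtain ⟨rfl, rfl⟩ := hΔ
          have hΓne := mg_ne_nil hR h1
          have hΓ₁ : Γ₁ = [] ∧ Γ₂ = [] := by
            have hl := congrArg List.length hΓ
            simp only [List.length_append, List.length_cons, List.length_nil] at hl
            have : Γ.length ≠ 0 := by simpa using hΓne
            constructor <;> [skip; skip] <;>
              · rw [← List.length_eq_zero_iff]; omega
          obtain ⟨rfl, rfl⟩ := hΓ₁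
          simp only [List.nil_append, List.append_nil] at hΓ h2
          exact (ih1 x hΓ rfl).trans (ih2 A rfl rfl)
      | @transC Γ Δ A Γ₁ Δ₁ Δ₂ B h1 h2 ih1 ih2 =>
          rintro x hΓ hΔ
          have hΓne := mg_ne_nil hR h1
          exfalso
          have hl := congrArg List.length hΔ
          simp only [List.length_append, List.length_nil] at hl
          rw [Ne, ← List.length_eq_zero_iff] at hΓne
          omega
    exact key _ _ _ h a rfl rfl
  · intro h
    induction h with
    | single h => exact MG.base h
    | @tail c d h1 h2 ih =>
        have := MG.transG (Γ₁ := []) (Γ₂ := []) (Δ₁ := []) ih (MG.base h2)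
        simpa using this
end
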